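/- Zhang–Ma bound for n = 2: for any rational Bézier curve of degree 2 with positive weights ω_0, ω_1, ω_2 and control points p_0, p_1, p_2 ∈ ℝ^d, ‖r'(t)‖ ≤ 2ω·max(‖p_1 − p_0‖, ‖p_2 − p_1‖) for all t ∈ [0,1], where ω = max(ω_0/ω_1, ω_1/ω_0, ω_1/ω_2, ω_2/ω_1). -/

import Mathlib

/-- Bernstein polynomial `B_i^n(t) = C(n,i) t^i (1-t)^(n-i)`. -/
def bern (n i : ℕ) (t : ℝ) : ℝ := (n.choose i : ℝ) * t ^ i * (1 - t) ^ (n - i)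

private lemma zm_c2 (a b c ω : ℝ) (ha : 0 < a) (hb : 0 < b) (hc : 0 < c)
    (g1 : a ≤ ω*b) (g2 : b ≤ ω*a) (g4 : c ≤ ω*b) :
    a*b + 4*(a*c) + b*c ≤ ω * (2*(a*c) + 4*b^2) := by
  have hω1 : 1 ≤ ω := by nlinarith
  rcases le_total ω 2 with h | h
  · nlinarith [mul_nonneg (sub_nonneg.2 h)
      (sub_nonneg.2 (mul_le_mul g1 g4 hc.le (by positivity) : a*c ≤ (ω*b)*(ω*b))),
      mul_nonneg (mul_nonneg (by linarith : (0:ℝ) ≤ ω) (sq_nonneg (ω-1))) (sq_nonneg b),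
      mul_pos ha hc, mul_le_mul_of_nonneg_right g1 hb.le, mul_le_mul_of_nonneg_right g4 hb.le]
  · nlinarith [mul_pos ha hc, mul_le_mul_of_nonneg_right g1 hb.le,
      mul_le_mul_of_nonneg_right g4 hb.le,
      mul_nonneg (by linarith : (0:ℝ) ≤ 2*ω - 4) (mul_pos ha hc).le]

private lemma zm_key (a b c ω : ℝ) (ha : 0 < a) (hb : 0 < b) (hc : 0 < c)
    (g1 : a ≤ ω*b) (g2 : b ≤ ω*a) (g3 : b ≤ ω*c) (g4 : c ≤ ω*b)
    (t : ℝ) (ht0 : 0 ≤ t) (ht1 : t ≤ 1) :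
    a*b*(1-t)^2 + 2*(a*c)*(t*(1-t)) + b*c*t^2
      ≤ ω * (a*(1-t)^2 + 2*b*(t*(1-t)) + c*t^2)^2 := by
  have hω1 : 1 ≤ ω := by nlinarith
  have hc2 := zm_c2 a b c ω ha hb hc g1 g2 g4
  have e0 : 0 ≤ (ω*a^2 - a*b) * (1-t)^4 := by
    apply mul_nonneg _ (by positivity); nlinarith
  have e1 : 0 ≤ (4*ω*(a*b) - 2*(a*b) - 2*(a*c)) * (t*(1-t)^3) := by
    apply mul_nonneg _ (by nlinarith [pow_nonneg (by linarith : (0:ℝ) ≤ 1-t) 3])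
    nlinarith [mul_le_mul_of_nonneg_left g4 ha.le, mul_le_mul_of_nonneg_left g2 ha.le]
  have e2 : 0 ≤ (ω*(2*(a*c) + 4*b^2) - (a*b + 4*(a*c) + b*c)) * (t^2*(1-t)^2) := by
    apply mul_nonneg (by linarith) (by positivity)
  have e3 : 0 ≤ (4*ω*(b*c) - 2*(a*c) - 2*(b*c)) * (t^3*(1-t)) := by
    apply mul_nonneg _ (by nlinarith [pow_nonneg ht0 3])
    nlinarith [mul_le_mul_of_nonneg_left g1 hc.le, mul_le_mul_of_nonneg_left g3 hc.le]
  have e4 : 0 ≤ (ω*c^2 - b*c) * t^4 := by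
    apply mul_nonneg _ (by positivity); nlinarith
  nlinarith [e0, e1, e2, e3, e4]

set_option maxHeartbeats 1000000 in
theorem stmt_15 {E : Type*} [NormedAddCommGroup E] [NormedSpace ℝ E]
    (ω0 ω1 ω2 : ℝ) (h0 : 0 < ω0) (h1 : 0 < ω1) (h2 : 0 < ω2)
    (p0 p1 p2 : E)
    (r : ℝ → E)
    (hr : r = fun t =>
      (ω0 * bern 2 0 t + ω1 * bern 2 1 t + ω2 * bern 2 2 t)⁻¹ •
        ((ω0 * bern 2 0 t) • p0 + (ω1 * bern 2 1 t) • p1 + (ω2 * bern 2 2 t) • p2)) :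
    ∀ t ∈ Set.Icc (0 : ℝ) 1,
      ‖deriv r t‖ ≤
        2 * max (max (ω0 / ω1) (ω1 / ω0)) (max (ω1 / ω2) (ω2 / ω1)) *
          max ‖p1 - p0‖ ‖p2 - p1‖ := by
  have hr' : r = fun x => (ω0*(1-x)^2 + ω1*(2*(x*(1-x))) + ω2*x^2)⁻¹ •
      ((ω0*(1-x)^2) • p0 + (ω1*(2*(x*(1-x)))) • p1 + (ω2*x^2) • p2) := by
    rw [hr]; funext x
    have b0 : bern 2 0 x = (1-x)^2 := by simp [bern]
    have b1 : bern 2 1 x = 2*(x*(1-x)) := by simp [bern]; ring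
    have b2 : bern 2 2 x = x^2 := by simp [bern]
    rw [b0, b1, b2]
  intro t ht
  obtain ⟨ht0, ht1⟩ := ht
  set ω : ℝ := max (max (ω0 / ω1) (ω1 / ω0)) (max (ω1 / ω2) (ω2 / ω1)) with hωdef
  have g1 : ω0 ≤ ω*ω1 := by
    have : ω0/ω1 ≤ ω := le_trans (le_max_left _ _) (le_max_left _ _)
    rw [div_le_iff₀ h1] at this; linarith
  have g2 : ω1 ≤ ω*ω0 := by
    have : ω1/ω0 ≤ ω := le_trans (le_max_right _ _) (le_max_left _ _)
    rw [div_le_iff₀ h0] at this; linarith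
  have g3 : ω1 ≤ ω*ω2 := by
    have : ω1/ω2 ≤ ω := le_trans (le_max_left _ _) (le_max_right _ _)
    rw [div_le_iff₀ h2] at this; linarith
  have g4 : ω2 ≤ ω*ω1 := by
    have : ω2/ω1 ≤ ω := le_trans (le_max_right _ _) (le_max_right _ _)
    rw [div_le_iff₀ h1] at this; linarith
  set W : ℝ := ω0*(1-t)^2 + ω1*(2*(t*(1-t))) + ω2*t^2 with hWdef
  have h1t : 0 ≤ 1 - t := by linarith
  have htt : 0 ≤ t*(1-t) := mul_nonneg ht0 h1t
  have hWpos : 0 < W := by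
    have hmid : 0 ≤ ω1*(2*(t*(1-t))) := by positivity
    rcases le_total t (1/2) with h | h
    · nlinarith [mul_pos h0 (show (0:ℝ) < (1-t)^2 by nlinarith), mul_nonneg h2.le (sq_nonneg t)]
    · nlinarith [mul_pos h2 (show (0:ℝ) < t^2 by nlinarith), mul_nonneg h0.le (sq_nonneg (1-t))]
  have hWne : W ≠ 0 := hWpos.ne'
  -- derivative computation
  have hds : HasDerivAt (fun x : ℝ => 1 - x) (-1) t := by
    simpa using (hasDerivAt_id t).const_sub (1:ℝ)
  have hA : HasDerivAt (fun x : ℝ => ω0*(1-x)^2) (ω0*(2*(1-t)^1*(-1))) t :=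
    (hds.pow 2).const_mul ω0
  have hB : HasDerivAt (fun x : ℝ => ω1*(2*(x*(1-x)))) (ω1*(2*(1*(1-t) + t*(-1)))) t :=
    (((hasDerivAt_id t).mul hds).const_mul 2).const_mul ω1
  have hC : HasDerivAt (fun x : ℝ => ω2*x^2) (ω2*(2*t^1)) t :=
    (hasDerivAt_pow 2 t).const_mul ω2
  have hW : HasDerivAt (fun x : ℝ => ω0*(1-x)^2 + ω1*(2*(x*(1-x))) + ω2*x^2)
      (ω0*(2*(1-t)^1*(-1)) + ω1*(2*(1*(1-t) + t*(-1))) + ω2*(2*t^1)) t := (hA.add hB).add hC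
  have hN : HasDerivAt (fun x : ℝ => (ω0*(1-x)^2) • p0 + (ω1*(2*(x*(1-x)))) • p1 + (ω2*x^2) • p2)
      ((ω0*(2*(1-t)^1*(-1))) • p0 + (ω1*(2*(1*(1-t) + t*(-1)))) • p1 + (ω2*(2*t^1)) • p2) t :=
    ((hA.smul_const p0).add (hB.smul_const p1)).add (hC.smul_const p2)
  have hInv : HasDerivAt (fun x : ℝ => (ω0*(1-x)^2 + ω1*(2*(x*(1-x))) + ω2*x^2)⁻¹)
      (-(ω0*(2*(1-t)^1*(-1)) + ω1*(2*(1*(1-t) + t*(-1))) + ω2*(2*t^1)) / W^2) t := hW.inv hWne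
  have hR : HasDerivAt r
      (W⁻¹ • ((ω0*(2*(1-t)^1*(-1))) • p0 + (ω1*(2*(1*(1-t) + t*(-1)))) • p1 + (ω2*(2*t^1)) • p2)
       + (-(ω0*(2*(1-t)^1*(-1)) + ω1*(2*(1*(1-t) + t*(-1))) + ω2*(2*t^1)) / W^2) •
        ((ω0*(1-t)^2) • p0 + (ω1*(2*(t*(1-t)))) • p1 + (ω2*t^2) • p2)) t := by
    rw [hr']
    exact hInv.smul hN
  have hderiv : deriv r t =
      (2*(ω0*ω1*(1-t)^2 + ω0*ω2*(t*(1-t))) / W^2) • (p1 - p0)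
      + (2*(ω0*ω2*(t*(1-t)) + ω1*ω2*t^2) / W^2) • (p2 - p1) := by
    rw [hR.deriv]
    match_scalars
    · field_simp; ring
    · field_simp; ring
    · field_simp; ring
  set α : ℝ := 2*(ω0*ω1*(1-t)^2 + ω0*ω2*(t*(1-t))) / W^2 with hαdef
  set β : ℝ := 2*(ω0*ω2*(t*(1-t)) + ω1*ω2*t^2) / W^2 with hβdef
  have hα : 0 ≤ α := by
    apply div_nonneg _ (sq_nonneg _)
    nlinarith [mul_nonneg (mul_pos h0 h2).le htt, mul_nonneg (mul_pos h0 h1).le (sq_nonneg (1-t))]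
  have hβ : 0 ≤ β := by
    apply div_nonneg _ (sq_nonneg _)
    nlinarith [mul_nonneg (mul_pos h0 h2).le htt, mul_nonneg (mul_pos h1 h2).le (sq_nonneg t)]
  have hkey := zm_key ω0 ω1 ω2 ω h0 h1 h2 g1 g2 g3 g4 t ht0 ht1
  have hkey2 : ω0*ω1*(1-t)^2 + 2*(ω0*ω2)*(t*(1-t)) + ω1*ω2*t^2 ≤ ω * W^2 := by
    rw [hWdef]; nlinarith [hkey]
  have hsum : α + β ≤ 2*ω := by
    rw [hαdef, hβdef, ← add_div, div_le_iff₀ (by positivity)]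
    nlinarith [hkey2]
  set M : ℝ := max ‖p1 - p0‖ ‖p2 - p1‖ with hMdef
  have hM : 0 ≤ M := le_trans (norm_nonneg _) (le_max_left _ _)
  calc ‖deriv r t‖ = ‖α • (p1 - p0) + β • (p2 - p1)‖ := by rw [hderiv]
    _ ≤ ‖α • (p1 - p0)‖ + ‖β • (p2 - p1)‖ := norm_add_le _ _
    _ = α * ‖p1 - p0‖ + β * ‖p2 - p1‖ := by
        rw [norm_smul, norm_smul, Real.norm_of_nonneg hα, Real.norm_of_nonneg hβ]
    _ ≤ α * M + β * M := by
        exact add_le_add (mul_le_mul_of_nonneg_left (le_max_left _ _) hα)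
          (mul_le_mul_of_nonneg_left (le_max_right _ _) hβ)
    _ = (α + β) * M := by ring
    _ ≤ (2*ω) * M := mul_le_mul_of_nonneg_right hsum hM
    _ = 2 * ω * M := by ring
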